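/- Let x_1,...,x_N ∈ St(d,r), x̂ = (1/N)∑ x_i, and x̄ the induced arithmetic mean (projection of x̂ onto St(d,r)). If ∑_i ‖x_i − x̄‖_F² ≤ N/2, then ‖x̄ − x̂‖_F ≤ (2√r / N) · ∑_i ‖x_i − x̄‖_F². -/

import Mathlib

open Matrix BigOperators Finset

noncomputable def fnorm {d r : ℕ} (A : Matrix (Fin d) (Fin r) ℝ) : ℝ :=
  Real.sqrt (∑ i, ∑ j, (A i j) ^ 2)

def ip {d r : ℕ} (A B : Matrix (Fin d) (Fin r) ℝ) : ℝ :=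
  ∑ i, ∑ j, A i j * B i j

def Stiefel (d r : ℕ) : Set (Matrix (Fin d) (Fin r) ℝ) :=
  {x | xᵀ * x = 1}

lemma ip_trace {d r : ℕ} (A B : Matrix (Fin d) (Fin r) ℝ) :
    ip A B = (Aᵀ * B).trace := by
  unfold ip
  rw [Matrix.trace]
  simp only [Matrix.diag, Matrix.mul_apply, Matrix.transpose_apply]
  exact Finset.sum_comm

lemma fnorm_sq {d r : ℕ} (A : Matrix (Fin d) (Fin r) ℝ) :
    fnorm A ^ 2 = (Aᵀ * A).trace := by
  unfold fnorm
  rw [Real.sq_sqrt (by positivity), Matrix.trace]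
  simp only [Matrix.diag, Matrix.mul_apply, Matrix.transpose_apply]
  rw [Finset.sum_comm]
  simp [pow_two]

lemma fnorm_nonneg' {d r : ℕ} (A : Matrix (Fin d) (Fin r) ℝ) : 0 ≤ fnorm A :=
  Real.sqrt_nonneg _

lemma transpose_std {r d : ℕ} (k : Fin d) (l : Fin r) (c : ℝ) :
    (Matrix.single k l c)ᵀ = Matrix.single l k c := by
  ext a b
  simp [Matrix.single, and_comm]

lemma trace_std_mul {r : ℕ} (k l : Fin r) (M : Matrix (Fin r) (Fin r) ℝ) :
    (Matrix.single k l (1:ℝ) * M).trace = M l k := by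
  rw [Matrix.trace, Finset.sum_eq_single k]
  · simp [Matrix.diag]
  · intro b _ hb
    simp [Matrix.diag, hb]
  · simp

lemma polar_symm {d r : ℕ} {B A : Matrix (Fin d) (Fin r) ℝ}
    (hB : Bᵀ * B = 1)
    (key : ∀ y : Matrix (Fin d) (Fin r) ℝ, yᵀ * y = 1 → (yᵀ * A).trace ≤ (Bᵀ * A).trace) :
    (Bᵀ * A)ᵀ = Bᵀ * A := by
  set M := Bᵀ * A with hM
  ext l k
  simp only [Matrix.transpose_apply]
  rcases eq_or_ne k l with rfl | hkl
  · rfl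
  have cond : ∀ s : ℝ, s * (M k l - M l k) ≤ s^2 * (M k k + M l l) := by
    intro s
    have hpos : (0:ℝ) < 1 + s^2 := by positivity
    set a : ℝ := -2*s^2/(1+s^2) with ha
    set b : ℝ := 2*s/(1+s^2) with hb
    set D : Matrix (Fin r) (Fin r) ℝ := Matrix.single k k 1 + Matrix.single l l 1 with hD
    set W : Matrix (Fin r) (Fin r) ℝ := Matrix.single k l 1 - Matrix.single l k 1 with hW
    have hDD : D * D = D := by
      simp [hD, mul_add, add_mul, hkl, hkl.symm]
    have hDW : D * W = W := by
      simp [hD, hW, mul_sub, add_mul, hkl, hkl.symm]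
    have hWD : W * D = W := by
      simp [hD, hW, sub_mul, mul_add, hkl, hkl.symm]
      abel
    have hWW : W * W = -D := by
      simp [hD, hW, mul_sub, sub_mul, hkl, hkl.symm]
      abel
    set Q : Matrix (Fin r) (Fin r) ℝ := 1 + a • D + b • W with hQ
    have hQT : Qᵀ = 1 + a • D - b • W := by
      rw [hQ]
      simp only [Matrix.transpose_add, Matrix.transpose_one, Matrix.transpose_smul, hD, hW,
        Matrix.transpose_sub, transpose_std]
      module
    have hab : 2*a + a*a + b*b = 0 := by
      rw [ha, hb]; field_simp; ring
    have hQQ : Qᵀ * Q = 1 := by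
      rw [hQT, hQ]
      have expand : (1 + a • D - b • W) * (1 + a • D + b • W)
          = 1 + (2*a + a*a + b*b) • D := by
        simp only [mul_add, add_mul, sub_mul, mul_sub, smul_mul_assoc, mul_smul_comm,
          one_mul, mul_one, hDD, hDW, hWD, hWW, smul_smul, smul_neg]
        module
      rw [expand, hab, zero_smul, add_zero]
    have hy : ((B * Q)ᵀ * (B * Q)) = 1 := by
      rw [Matrix.transpose_mul, Matrix.mul_assoc, ← Matrix.mul_assoc Bᵀ B Q, hB, one_mul, hQQ]
    have hkey := key (B * Q) hy
    have hDM : (D * M).trace = M k k + M l l := by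
      rw [hD, add_mul, Matrix.trace_add, trace_std_mul, trace_std_mul]
    have hWM : (W * M).trace = M l k - M k l := by
      rw [hW, sub_mul, Matrix.trace_sub, trace_std_mul, trace_std_mul]
    have htr : ((B * Q)ᵀ * A).trace
        = M.trace + a * (M k k + M l l) - b * (M l k - M k l) := by
      rw [Matrix.transpose_mul, Matrix.mul_assoc, ← hM, hQT, sub_mul, add_mul, one_mul,
        smul_mul_assoc, smul_mul_assoc, Matrix.trace_sub, Matrix.trace_add,
        Matrix.trace_smul, Matrix.trace_smul, hDM, hWM]
      simp [smul_eq_mul]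
    rw [htr] at hkey
    have h3 : a * (M k k + M l l) - b * (M l k - M k l) ≤ 0 := by linarith
    have hae : a * (1+s^2) = -2*s^2 := by rw [ha]; field_simp
    have hbe : b * (1+s^2) = 2*s := by rw [hb]; field_simp
    have h5 : (-2*s^2) * (M k k + M l l) - (2*s) * (M l k - M k l) ≤ 0 := by
      have h6 := mul_le_mul_of_nonneg_right h3 hpos.le
      calc (-2*s^2) * (M k k + M l l) - (2*s) * (M l k - M k l)
          = (a * (M k k + M l l) - b * (M l k - M k l)) * (1+s^2) := by
            rw [← hae, ← hbe]; ring
        _ ≤ 0 := by simpa using h6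
    nlinarith [h5]
  by_contra hne
  set Dd : ℝ := M k l - M l k with hDd
  have hDd0 : Dd ≠ 0 := sub_ne_zero.mpr hne
  set C : ℝ := M k k + M l l with hC
  have hst := cond (Dd / (|C| + 1))
  have h1 : (0:ℝ) < Dd^2 := by positivity
  have h2 : C ≤ |C| := le_abs_self C
  have h3 : (0:ℝ) < |C| + 1 := by positivity
  rw [div_mul_eq_mul_div, div_pow, div_mul_eq_mul_div,
    div_le_div_iff₀ (by positivity) (by positivity)] at hst
  have h4 : Dd^2 * (|C|+1) * C < Dd^2 * (|C|+1) * (|C|+1) :=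
    mul_lt_mul_of_pos_left (by linarith) (by positivity)
  nlinarith [hst, h4]

set_option maxHeartbeats 1000000 in
lemma polar_range {d r : ℕ} {B A : Matrix (Fin d) (Fin r) ℝ}
    (hB : Bᵀ * B = 1)
    (key : ∀ y : Matrix (Fin d) (Fin r) ℝ, yᵀ * y = 1 → (yᵀ * A).trace ≤ (Bᵀ * A).trace) :
    A = B * (Bᵀ * A) := by
  set M := Bᵀ * A with hM
  set R := A - B * M with hR
  have hBR : Bᵀ * R = 0 := by
    rw [hR, Matrix.mul_sub, ← Matrix.mul_assoc, hB, one_mul, sub_self]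
  have hRB : Rᵀ * B = 0 := by
    have := congrArg Matrix.transpose hBR
    simpa [Matrix.transpose_mul] using this
  have hcol : ∀ k : Fin r, ∑ i, R i k ^ 2 = 0 := by
    intro k
    by_contra hcc
    set cc : ℝ := ∑ i, R i k ^ 2 with hccd
    have hccpos : 0 < cc := lt_of_le_of_ne (by positivity) (Ne.symm hcc)
    set c : ℝ := Real.sqrt cc with hcd
    have hcpos : 0 < c := Real.sqrt_pos.mpr hccpos
    have hc2 : c * c = cc := Real.mul_self_sqrt hccpos.le
    set u : Fin d → ℝ := fun i => R i k / c with hu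
    clear_value cc c
    have hu1 : ∑ i, u i * u i = 1 := by
      have e : ∀ i : Fin d, u i * u i = R i k ^ 2 / cc := by
        intro i
        rw [hu]
        simp only []
        rw [div_mul_div_comm, hc2, pow_two]
      rw [Finset.sum_congr rfl fun i _ => e i, ← Finset.sum_div, ← hccd, div_self hcc]
    have hub : ∀ j : Fin r, ∑ i, B i j * u i = 0 := by
      intro j
      have e0 : ∑ i, B i j * R i k = 0 := by
        have := congrFun (congrFun hBR j) k
        simpa [Matrix.mul_apply, Matrix.transpose_apply] using this
      have e : ∀ i : Fin d, B i j * u i = (B i j * R i k) / c := by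
        intro i; rw [hu]; simp only []; rw [mul_div_assoc]
      rw [Finset.sum_congr rfl fun i _ => e i, ← Finset.sum_div, e0, zero_div]
    have hra : ∑ i, R i k * A i k = cc := by
      have e2 : ∑ i, R i k * (B * M) i k = ((Rᵀ * B) * M) k k := by
        rw [Matrix.mul_assoc]
        simp [Matrix.mul_apply, Matrix.transpose_apply]
      rw [hRB] at e2
      simp only [Matrix.zero_mul, Matrix.zero_apply] at e2
      have e3 : ∀ i : Fin d, R i k * A i k = R i k ^ 2 + R i k * (B * M) i k := by
        intro i
        have h : R i k = A i k - (B * M) i k := by rw [hR]; simp [Matrix.sub_apply]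
        linear_combination (- R i k) * h
      rw [Finset.sum_congr rfl fun i _ => e3 i, Finset.sum_add_distrib, e2, add_zero, ← hccd]
    set U : Matrix (Fin d) (Fin r) ℝ := Matrix.of fun i j => if j = k then u i else 0 with hU
    set E : Matrix (Fin r) (Fin r) ℝ := Matrix.single k k 1 with hE
    have hBU : Bᵀ * U = 0 := by
      ext p q
      by_cases hq : q = k
      · simp [Matrix.mul_apply, hU, hq, hub p]
      · simp [Matrix.mul_apply, hU, hq]
    have hUB : Uᵀ * B = 0 := by
      have := congrArg Matrix.transpose hBU
      simpa [Matrix.transpose_mul] using this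
    have hUU : Uᵀ * U = E := by
      ext p q
      simp only [Matrix.mul_apply, Matrix.transpose_apply, hU, Matrix.of_apply, hE,
        Matrix.single, mul_ite, ite_mul, mul_zero, zero_mul]
      by_cases hp : p = k
      · by_cases hq : q = k
        · simp [hp, hq, hu1]
        · simp [hp, hq, Ne.symm hq]
      · by_cases hq : q = k
        · simp [hp, hq, Ne.symm hp]
        · simp [hp, hq, Ne.symm hp, Ne.symm hq]
    have hUA : (Uᵀ * A).trace = c := by
      have e : ∀ i : Fin d, u i * A i k = (R i k * A i k) / c := by
        intro i; rw [hu]; simp only []; rw [div_mul_eq_mul_div]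
      rw [Matrix.trace, Finset.sum_eq_single k]
      · simp only [Matrix.diag, Matrix.mul_apply, Matrix.transpose_apply, hU, Matrix.of_apply,
          if_pos rfl, ite_true]
        rw [Finset.sum_congr rfl fun i _ => e i, ← Finset.sum_div, hra, ← hc2,
          mul_div_assoc, div_self hcpos.ne', mul_one]
      · intro b _ hb
        simp [Matrix.diag, Matrix.mul_apply, hU, hb]
      · simp
    have cond : ∀ s : ℝ, s * c ≤ s ^ 2 * M k k := by
      intro s
      have hpos : (0:ℝ) < 1 + s^2 := by positivity
      set a : ℝ := -2*s^2/(1+s^2) with ha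
      set b : ℝ := 2*s/(1+s^2) with hb
      set y : Matrix (Fin d) (Fin r) ℝ := B * (1 + a • E) + b • U with hy
      have hyT : yᵀ = (1 + a • E) * Bᵀ + b • Uᵀ := by
        rw [hy]
        simp only [Matrix.transpose_add, Matrix.transpose_mul, Matrix.transpose_smul,
          Matrix.transpose_one, hE, transpose_std]
      have hEE : E * E = E := by
        rw [hE]; simp
      have t1 : (1 + a • E) * Bᵀ * (B * (1 + a • E)) = 1 + (2*a + a*a) • E := by
        rw [Matrix.mul_assoc (1 + a • E) Bᵀ _, ← Matrix.mul_assoc Bᵀ B _, hB, one_mul]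
        simp only [mul_add, add_mul, one_mul, mul_one, smul_mul_assoc, mul_smul_comm,
          smul_smul, hEE]
        module
      have t2 : (1 + a • E) * Bᵀ * U = 0 := by rw [Matrix.mul_assoc, hBU, mul_zero]
      have t3 : Uᵀ * (B * (1 + a • E)) = 0 := by rw [← Matrix.mul_assoc, hUB, zero_mul]
      have hab : 2*a + a*a + b*b = 0 := by
        rw [ha, hb]; field_simp; ring
      have hyy : yᵀ * y = 1 := by
        rw [hyT, hy]
        generalize hX : (1 + a • E : Matrix (Fin r) (Fin r) ℝ) = X at t1 t2 t3 ⊢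
        simp only [Matrix.add_mul, Matrix.mul_add, Matrix.smul_mul, Matrix.mul_smul, smul_smul]
        rw [t1, t2, t3, hUU]
        simp only [smul_zero, add_zero, zero_add]
        have hz : 2*a + a*a + b*b = 0 := by linarith [hab]
        match_scalars
        all_goals (try ring)
        all_goals linear_combination hz
      have hkey := key y hyy
      have htr : (yᵀ * A).trace = M.trace + a * M k k + b * c := by
        rw [hyT, Matrix.add_mul, Matrix.smul_mul, Matrix.trace_add, Matrix.trace_smul, hUA,
          Matrix.mul_assoc, ← hM, Matrix.add_mul, Matrix.one_mul, Matrix.smul_mul,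
          Matrix.trace_add, Matrix.trace_smul, hE, trace_std_mul]
        simp [smul_eq_mul]
      rw [htr] at hkey
      have h3 : a * M k k + b * c ≤ 0 := by linarith
      have hae : a * (1+s^2) = -2*s^2 := by rw [ha]; field_simp
      have hbe : b * (1+s^2) = 2*s := by rw [hb]; field_simp
      have h5 : (-2*s^2) * M k k + (2*s) * c ≤ 0 := by
        have h6 := mul_le_mul_of_nonneg_right h3 hpos.le
        calc (-2*s^2) * M k k + (2*s) * c
            = (a * M k k + b * c) * (1+s^2) := by rw [← hae, ← hbe]; ring
          _ ≤ 0 := by simpa using h6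
      nlinarith [h5]
    have h1 := cond 1
    have hMk : 0 < M k k := by nlinarith [h1, hcpos]
    have h2 := cond (c / (2 * M k k))
    rw [div_mul_eq_mul_div, div_pow, div_mul_eq_mul_div,
      div_le_div_iff₀ (by positivity) (by positivity)] at h2
    nlinarith [h2, mul_pos (mul_pos hcpos hcpos) (mul_pos hMk hMk)]
  have hR0 : R = 0 := by
    ext i j
    have := hcol j
    have h0 : ∀ i ∈ Finset.univ, (0:ℝ) ≤ R i j ^ 2 := fun i _ => sq_nonneg _
    have := (Finset.sum_eq_zero_iff_of_nonneg h0).mp this i (Finset.mem_univ i)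
    simpa using pow_eq_zero_iff (n := 2) (by norm_num) |>.mp this
  have h0 : A - B * M = 0 := by rw [← hR, hR0]
  exact sub_eq_zero.mp h0

lemma quad_eq {d r : ℕ} (X Y : Matrix (Fin d) (Fin r) ℝ) (v : Fin r → ℝ) :
    ∑ a, ∑ b, v a * ((Xᵀ * Y) a b * v b)
      = ∑ j, (∑ a, X j a * v a) * (∑ b, Y j b * v b) := by
  have step : ∀ j : Fin d, (∑ a, X j a * v a) * (∑ b, Y j b * v b)
      = ∑ a, ∑ b, v a * (X j a * Y j b * v b) := by
    intro j
    rw [Finset.sum_mul_sum]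
    exact Finset.sum_congr rfl fun a _ => Finset.sum_congr rfl fun b _ => by ring
  rw [Finset.sum_congr rfl fun j (_ : j ∈ Finset.univ) => step j]
  simp only [Matrix.mul_apply, Matrix.transpose_apply, Finset.sum_mul, Finset.mul_sum]
  rw [Finset.sum_congr rfl fun a (_ : a ∈ Finset.univ) => Finset.sum_comm]
  exact Finset.sum_comm

lemma quad_one {d r : ℕ} (X : Matrix (Fin d) (Fin r) ℝ) (hX : Xᵀ * X = 1) (v : Fin r → ℝ) :
    ∑ j, (∑ a, X j a * v a) * (∑ b, X j b * v b) = ∑ a, v a * v a := by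
  rw [← quad_eq, hX]
  simp [Matrix.one_apply, mul_ite, ite_mul, Finset.sum_ite_eq, Finset.mem_univ]

lemma cs_bound {d r : ℕ} {X Y : Matrix (Fin d) (Fin r) ℝ} (hX : Xᵀ * X = 1) (hY : Yᵀ * Y = 1)
    (v : Fin r → ℝ) :
    ∑ j, (∑ a, X j a * v a) * (∑ b, Y j b * v b) ≤ ∑ a, v a * v a := by
  have hcs := Finset.sum_mul_sq_le_sq_mul_sq Finset.univ
    (fun j => ∑ a, X j a * v a) (fun j => ∑ b, Y j b * v b)
  have h1 : ∑ j, (∑ a, X j a * v a) ^ 2 = ∑ a, v a * v a := by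
    rw [← quad_one X hX v]
    exact Finset.sum_congr rfl fun j _ => by rw [pow_two]
  have h2 : ∑ j, (∑ b, Y j b * v b) ^ 2 = ∑ a, v a * v a := by
    rw [← quad_one Y hY v]
    exact Finset.sum_congr rfl fun j _ => by rw [pow_two]
  have h3 : 0 ≤ ∑ a, v a * v a := Finset.sum_nonneg fun a _ => mul_self_nonneg _
  rw [h1, h2] at hcs
  nlinarith [hcs, h3]

set_option maxHeartbeats 1000000 in
theorem stmt1 {N d r : ℕ} (hN : 0 < N)
    (x : Fin N → Matrix (Fin d) (Fin r) ℝ) (hx : ∀ i, x i ∈ Stiefel d r)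
    (xhat : Matrix (Fin d) (Fin r) ℝ) (hxhat : xhat = ((N : ℝ))⁻¹ • ∑ i, x i)
    (xbar : Matrix (Fin d) (Fin r) ℝ) (hmem : xbar ∈ Stiefel d r)
    (hmax : ∀ y ∈ Stiefel d r, ip y (∑ i, x i) ≤ ip xbar (∑ i, x i))
    (hsum : ∑ i, fnorm (x i - xbar) ^ 2 ≤ (N : ℝ) / 2) :
    fnorm (xbar - xhat) ≤ (2 * Real.sqrt r / (N : ℝ)) * ∑ i, fnorm (x i - xbar) ^ 2 := by
  classical
  have hN' : ((N:ℝ)) ≠ 0 := Nat.cast_ne_zero.mpr hN.ne'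
  have hNpos : (0:ℝ) < N := Nat.cast_pos.mpr hN
  have hx' : ∀ i, (x i)ᵀ * (x i) = 1 := hx
  set S : Matrix (Fin d) (Fin r) ℝ := ∑ i, x i with hS
  set B := xbar with hBdef
  set A := xhat with hAdef
  have hB : Bᵀ * B = 1 := hmem
  have hSA : S = (N:ℝ) • A := by rw [hxhat, smul_inv_smul₀ hN']
  have key : ∀ y : Matrix (Fin d) (Fin r) ℝ, yᵀ * y = 1 →
      (yᵀ * A).trace ≤ (Bᵀ * A).trace := by
    intro y hy
    have h := hmax y hy
    rw [ip_trace, ip_trace, hSA, Matrix.mul_smul, Matrix.mul_smul,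
      Matrix.trace_smul, Matrix.trace_smul, smul_eq_mul, smul_eq_mul] at h
    exact le_of_mul_le_mul_left h hNpos
  have hMsym := polar_symm hB key
  have hAeq := polar_range hB key
  set M := Bᵀ * A with hM
  set P : Matrix (Fin r) (Fin r) ℝ := 1 - M with hP
  -- quadratic form bound: qf of M ≤ |v|²
  have hqf : ∀ v : Fin r → ℝ, ∑ a, ∑ b, v a * (M a b * v b) ≤ ∑ a, v a * v a := by
    intro v
    rw [hM, quad_eq]
    have hAv : ∀ j : Fin d, (∑ b, A j b * v b)
        = (N:ℝ)⁻¹ * ∑ i, ∑ b, x i j b * v b := by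
      intro j
      have hAe : ∀ b, A j b = (N:ℝ)⁻¹ * ∑ i, x i j b := by
        intro b
        rw [hxhat]
        simp [Matrix.smul_apply, Matrix.sum_apply, hS]
      rw [Finset.sum_congr rfl fun b (_ : b ∈ Finset.univ) => by rw [hAe b, mul_assoc]]
      rw [← Finset.mul_sum]
      congr 1
      rw [Finset.sum_comm]
      exact Finset.sum_congr rfl fun i _ => by rw [Finset.sum_mul]
    calc ∑ j, (∑ a, B j a * v a) * (∑ b, A j b * v b)
        = (N:ℝ)⁻¹ * ∑ i, ∑ j, (∑ a, B j a * v a) * (∑ b, x i j b * v b) := by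
          have hj : ∀ j : Fin d, (∑ a, B j a * v a) * (∑ b, A j b * v b)
              = (N:ℝ)⁻¹ * ∑ i, (∑ a, B j a * v a) * (∑ b, x i j b * v b) := by
            intro j
            rw [hAv j, mul_left_comm, Finset.mul_sum]
          rw [Finset.sum_congr rfl fun j (_ : j ∈ Finset.univ) => hj j, ← Finset.mul_sum]
          congr 1
          exact Finset.sum_comm
      _ ≤ (N:ℝ)⁻¹ * ∑ i : Fin N, ∑ a, v a * v a := by
          apply mul_le_mul_of_nonneg_left _ (by positivity)
          exact Finset.sum_le_sum fun i _ => cs_bound hB (hx' i) v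
      _ = ∑ a, v a * v a := by
          rw [Finset.sum_const, Finset.card_univ, Fintype.card_fin, nsmul_eq_mul]
          field_simp
  -- P quadratic form nonneg
  have hone : ∀ v : Fin r → ℝ, ∑ a, ∑ b, v a * ((1:Matrix (Fin r) (Fin r) ℝ) a b * v b)
      = ∑ a, v a * v a := by
    intro v
    simp [Matrix.one_apply, mul_ite, ite_mul, Finset.sum_ite_eq, Finset.mem_univ]
  have hPq : ∀ v : Fin r → ℝ, 0 ≤ ∑ a, ∑ b, v a * (P a b * v b) := by
    intro v
    have hexp : ∑ a, ∑ b, v a * (P a b * v b)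
        = (∑ a, ∑ b, v a * ((1:Matrix (Fin r) (Fin r) ℝ) a b * v b))
          - ∑ a, ∑ b, v a * (M a b * v b) := by
      rw [← Finset.sum_sub_distrib]
      refine Finset.sum_congr rfl fun a _ => ?_
      rw [← Finset.sum_sub_distrib]
      refine Finset.sum_congr rfl fun b _ => ?_
      rw [hP]
      simp [Matrix.sub_apply]
      ring
    rw [hexp, hone]
    have := hqf v
    linarith
  -- entry bounds
  have hPsym : ∀ a b : Fin r, P b a = P a b := by
    intro a b
    have : M b a = M a b := by
      have := congrFun (congrFun hMsym a) b
      simpa [Matrix.transpose_apply] using this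
    rw [hP]
    simp [Matrix.sub_apply, Matrix.one_apply, this, eq_comm]
  have hdiag : ∀ a : Fin r, 0 ≤ P a a := by
    intro a
    have h := hPq (fun c => if c = a then 1 else 0)
    simpa [ite_mul, mul_ite, Finset.sum_ite_eq', Finset.mem_univ] using h
  have hent : ∀ a b : Fin r, P a b ^ 2 ≤ P a a * P b b := by
    intro a b
    rcases eq_or_ne a b with rfl | hab
    · rw [pow_two]
    · have hq : ∀ t : ℝ, 0 ≤ P a a * (t * t) + (2 * P a b) * t + P b b := by
        intro t
        have h := hPq (fun c => (if c = a then t else 0) + (if c = b then 1 else 0))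
        have hexp : ∑ c, ∑ e, ((if c = a then t else 0) + (if c = b then 1 else 0)) *
              (P c e * ((if e = a then t else 0) + (if e = b then 1 else 0)))
            = P a a * (t * t) + (2 * P a b) * t + P b b := by
          simp only [add_mul, mul_add, ite_mul, mul_ite, zero_mul, mul_zero, zero_add,
            add_zero, Finset.sum_add_distrib, Finset.sum_ite_eq', Finset.mem_univ, if_true]
          rw [hPsym a b]
          ring
        rw [hexp] at h
        exact h
      have hd := discrim_le_zero hq
      rw [discrim] at hd
      nlinarith [hd]
  -- trace facts
  have htrM : M.trace = (r:ℝ) - (∑ i, fnorm (x i - B) ^ 2) / (2 * N) := by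
    have hEi : ∀ i, fnorm (x i - B) ^ 2 = 2*(r:ℝ) - 2*((Bᵀ * x i).trace) := by
      intro i
      rw [fnorm_sq]
      have hex : (x i - B)ᵀ * (x i - B)
          = (x i)ᵀ * (x i) - (x i)ᵀ * B - (Bᵀ * (x i) - Bᵀ * B) := by
        rw [Matrix.transpose_sub, Matrix.sub_mul, Matrix.mul_sub, Matrix.mul_sub]
      have hx2 : ((x i)ᵀ * B).trace = (Bᵀ * (x i)).trace := by
        rw [← Matrix.trace_transpose, Matrix.transpose_mul, Matrix.transpose_transpose]
      rw [hex, Matrix.trace_sub, Matrix.trace_sub, Matrix.trace_sub, hx' i, hB, hx2,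
        Matrix.trace_one]
      simp [Fintype.card_fin]
      ring
    have hBS : (Bᵀ * S).trace = (N:ℝ) * M.trace := by
      rw [hSA, Matrix.mul_smul, Matrix.trace_smul, smul_eq_mul]
    have hBS2 : (Bᵀ * S).trace = ∑ i, (Bᵀ * x i).trace := by
      rw [hS, Matrix.mul_sum, Matrix.trace_sum]
    have h1 : ∑ i, fnorm (x i - B) ^ 2
        = 2*(N:ℝ)*(r:ℝ) - 2*((N:ℝ) * M.trace) := by
      rw [Finset.sum_congr rfl fun i (_ : i ∈ Finset.univ) => hEi i,
        Finset.sum_sub_distrib, Finset.sum_const, Finset.card_univ, Fintype.card_fin,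
        ← Finset.mul_sum, ← hBS2, hBS, nsmul_eq_mul]
      ring
    rw [h1]
    field_simp
    ring
  have htrP : P.trace = (∑ i, fnorm (x i - B) ^ 2) / (2 * N) := by
    rw [hP, Matrix.trace_sub, Matrix.trace_one, htrM]
    simp
  have htrPnn : 0 ≤ P.trace := by
    rw [Matrix.trace]
    exact Finset.sum_nonneg fun a _ => hdiag a
  -- Frobenius bound
  have hBA : B - A = B * P := by
    rw [hP, Matrix.mul_sub, Matrix.mul_one, ← hAeq]
  have hfro : fnorm (B - A) ^ 2 = ∑ a, ∑ b, P a b ^ 2 := by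
    rw [fnorm_sq, hBA, Matrix.transpose_mul, Matrix.mul_assoc, ← Matrix.mul_assoc Bᵀ B P,
      hB, Matrix.one_mul]
    rw [Matrix.trace]
    simp only [Matrix.diag, Matrix.mul_apply, Matrix.transpose_apply]
    rw [Finset.sum_comm]
    exact Finset.sum_congr rfl fun a _ => Finset.sum_congr rfl fun b _ => (pow_two _).symm
  have hsum2 : ∑ a, ∑ b, P a b ^ 2 ≤ P.trace ^ 2 := by
    have htr2 : P.trace ^ 2 = ∑ a, ∑ b, P a a * P b b := by
      rw [Matrix.trace, pow_two]
      simp only [Matrix.diag]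
      rw [Finset.sum_mul_sum]
    rw [htr2]
    exact Finset.sum_le_sum fun a _ => Finset.sum_le_sum fun b _ => hent a b
  have hfin : fnorm (B - A) ≤ P.trace := by
    have h1 : fnorm (B - A) ^ 2 ≤ P.trace ^ 2 := by rw [hfro]; exact hsum2
    nlinarith [fnorm_nonneg' (B - A), htrPnn, h1]
  -- conclusion
  have hEnn : 0 ≤ ∑ i, fnorm (x i - B) ^ 2 :=
    Finset.sum_nonneg fun i _ => sq_nonneg _
  rcases Nat.eq_zero_or_pos r with hr0 | hrpos
  · subst hr0
    have hz : fnorm (B - A) = 0 := by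
      unfold fnorm
      simp
    rw [hz]
    simp only [Nat.cast_zero, Real.sqrt_zero, mul_zero, zero_div, zero_mul]
    exact le_refl 0
  · have hr1 : (1:ℝ) ≤ Real.sqrt r := by
      rw [show (1:ℝ) = Real.sqrt 1 by simp]
      exact Real.sqrt_le_sqrt (by exact_mod_cast hrpos)
    have hstep : (∑ i, fnorm (x i - B) ^ 2) / (2 * (N:ℝ))
        ≤ 2 * Real.sqrt r / (N:ℝ) * ∑ i, fnorm (x i - B) ^ 2 := by
      have hco : (1:ℝ)/(2*(N:ℝ)) ≤ 2 * Real.sqrt r / (N:ℝ) := by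
        rw [div_le_div_iff₀ (by positivity) (by positivity)]
        nlinarith [hr1, hNpos]
      calc (∑ i, fnorm (x i - B) ^ 2) / (2 * (N:ℝ))
          = (1/(2*(N:ℝ))) * ∑ i, fnorm (x i - B) ^ 2 := by ring
        _ ≤ 2 * Real.sqrt r / (N:ℝ) * ∑ i, fnorm (x i - B) ^ 2 :=
            mul_le_mul_of_nonneg_right hco hEnn
    calc fnorm (B - A) ≤ P.trace := hfin
      _ = (∑ i, fnorm (x i - B) ^ 2) / (2 * N) := htrP
      _ ≤ 2 * Real.sqrt r / (N:ℝ) * ∑ i, fnorm (x i - B) ^ 2 := hstep
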